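/- Each set U_j = ⋃_{i : j ∈ σ_i} S_i is convex in ℝ^{k-1}. -/
import Mathlib


open Set

/-- The points {0, e_1, ..., e_t} in ℝ^d, where e_j = Pi.single (j-1) 1. -/
noncomputable def basisPts (d t : ℕ) : Set (Fin d → ℝ) :=
  insert 0 {x | ∃ m : Fin d, (m : ℕ) < t ∧ x = Pi.single m 1}

/-- F d t = conv{0, e_1, ..., e_t}. -/
noncomputable def F (d t : ℕ) : Set (Fin d → ℝ) := convexHull ℝ (basisPts d t)

/-- S d i = conv{0, e_1, ..., e_{i-1}} \ conv{0, e_1, ..., e_{i-2}}, with S d 1 = {0}. -/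
noncomputable def S (d i : ℕ) : Set (Fin d → ℝ) :=
  F d (i - 1) \ (if i ≤ 1 then ∅ else F d (i - 2))

lemma F_mono {d t t' : ℕ} (h : t ≤ t') : F d t ⊆ F d t' := by
  apply convexHull_mono
  rintro x (rfl | ⟨m, hm, rfl⟩)
  · exact Or.inl rfl
  · exact Or.inr ⟨m, hm.trans_le h, rfl⟩

lemma mem_F_iff {d t : ℕ} {x : Fin d → ℝ} :
    x ∈ F d t ↔ (∀ j, 0 ≤ x j) ∧ (∑ j, x j) ≤ 1 ∧ ∀ j : Fin d, t ≤ (j : ℕ) → x j = 0 := by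
  constructor
  · intro hx
    have hsub : basisPts d t ⊆
        {x : Fin d → ℝ | (∀ j, 0 ≤ x j) ∧ (∑ j, x j) ≤ 1 ∧ ∀ j : Fin d, t ≤ (j : ℕ) → x j = 0} := by
      rintro x (rfl | ⟨m, hm, rfl⟩)
      · refine ⟨fun j => le_refl 0, by simp, fun j _ => rfl⟩
      · refine ⟨fun j => ?_, ?_, fun j hj => ?_⟩
        · by_cases h : m = j <;> simp [Pi.single_apply, h]
        · simp [Pi.single_apply]
        · have : m ≠ j := by
            intro h; subst h; omega
          simp [Pi.single_apply, this]
    have hconv : Convex ℝ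
        {x : Fin d → ℝ | (∀ j, 0 ≤ x j) ∧ (∑ j, x j) ≤ 1 ∧ ∀ j : Fin d, t ≤ (j : ℕ) → x j = 0} := by
      intro u hu v hv a b ha hb hab
      refine ⟨fun j => ?_, ?_, fun j hj => ?_⟩
      · have := hu.1 j; have := hv.1 j
        simp only [Pi.add_apply, Pi.smul_apply, smul_eq_mul]
        positivity
      · simp only [Pi.add_apply, Pi.smul_apply, smul_eq_mul, Finset.sum_add_distrib,
          ← Finset.mul_sum]
        calc a * ∑ j, u j + b * ∑ j, v j ≤ a * 1 + b * 1 := by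
              gcongr; exacts [hu.2.1, hv.2.1]
          _ = 1 := by linarith
      · simp [hu.2.2 j hj, hv.2.2 j hj]
    exact convexHull_min hsub hconv hx
  · rintro ⟨h1, h2, h3⟩
    set w : Option (Fin d) → ℝ := fun i => Option.elim i (1 - ∑ j, x j) (fun j => x j) with hw
    set z : Option (Fin d) → (Fin d → ℝ) :=
      fun i => Option.elim i (0 : Fin d → ℝ)
        (fun j => if (j : ℕ) < t then Pi.single j 1 else 0) with hz
    have key : (∑ i : Option (Fin d), w i • z i) ∈ convexHull ℝ (basisPts d t) := by
      apply (convex_convexHull ℝ _).sum_mem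
      · rintro (_ | j) _
        · simpa [hw] using h2
        · exact h1 j
      · rw [Fintype.sum_option]; simp [hw]
      · rintro (_ | j) _
        · exact subset_convexHull ℝ _ (Or.inl rfl)
        · by_cases h : (j : ℕ) < t
          · simp only [hz, h, if_true, Option.elim]
            exact subset_convexHull ℝ _ (Or.inr ⟨j, h, rfl⟩)
          · simp only [hz, h, if_false, Option.elim]
            exact subset_convexHull ℝ _ (Or.inl rfl)
    have heq : (∑ i : Option (Fin d), w i • z i) = x := by
      rw [Fintype.sum_option]
      simp only [hw, hz, Option.elim, smul_zero, zero_add]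
      have : ∀ j : Fin d, x j • (if (j : ℕ) < t then (Pi.single j 1 : Fin d → ℝ) else 0)
          = x j • (Pi.single j 1 : Fin d → ℝ) := by
        intro j
        by_cases h : (j : ℕ) < t
        · simp [h]
        · simp [h, h3 j (le_of_not_gt h)]
      rw [Finset.sum_congr rfl (fun j _ => this j)]
      funext m
      simp [Finset.sum_apply, Pi.single_apply, mul_ite, Finset.sum_ite_eq]
    rwa [heq] at key

lemma key_lemma {d : ℕ} {i i' : ℕ} (hii' : i ≤ i') {x y : Fin d → ℝ}
    (hx : x ∈ S d (i + 1)) (hy : y ∈ S d (i' + 1)) {a b : ℝ}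
    (ha : 0 ≤ a) (hb : 0 ≤ b) (hab : a + b = 1) :
    a • x + b • y ∈ S d (i + 1) ∪ S d (i' + 1) := by
  rcases hb.eq_or_lt with hb0 | hb0
  · have ha1 : a = 1 := by linarith
    left
    simpa [ha1, ← hb0] using hx
  rcases Nat.eq_zero_or_pos i' with h0 | hpos
  · subst h0
    have hi0 : i = 0 := Nat.le_zero.mp hii'
    subst hi0
    simp only [S, Nat.add_sub_cancel] at hx hy ⊢
    have hx0 : x = 0 := funext fun j => (mem_F_iff.mp hx.1).2.2 j (Nat.zero_le _)
    have hy0 : y = 0 := funext fun j => (mem_F_iff.mp hy.1).2.2 j (Nat.zero_le _)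
    left
    have : a • x + b • y = x := by rw [hx0, hy0]; simp
    rwa [this]
  · right
    have hSi' : S d (i' + 1) = F d i' \ F d (i' - 1) := by
      simp only [S, Nat.add_sub_cancel]
      rw [if_neg (by omega)]
      congr 1
    rw [hSi'] at hy ⊢
    have hxF : x ∈ F d i' := by
      have : x ∈ F d i := by
        have := hx
        simp only [S, Nat.add_sub_cancel] at this
        exact this.1
      exact F_mono hii' this
    have hyF := hy.1
    have hzF : a • x + b • y ∈ F d i' :=
      (convex_convexHull ℝ _) hxF hyF ha hb hab
    refine ⟨hzF, ?_⟩
    -- find coordinate where y is positive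
    have hyc := mem_F_iff.mp hyF
    have hex : ∃ j : Fin d, (i' - 1 : ℕ) ≤ (j : ℕ) ∧ y j ≠ 0 := by
      by_contra hc
      push_neg at hc
      exact hy.2 (mem_F_iff.mpr ⟨hyc.1, hyc.2.1, fun j hj => hc j hj⟩)
    obtain ⟨j, hj, hyj⟩ := hex
    have hyj' : 0 < y j := lt_of_le_of_ne (hyc.1 j) (Ne.symm hyj)
    have hxj : 0 ≤ x j := (mem_F_iff.mp hxF).1 j
    intro hzmem
    have hz0 : (a • x + b • y) j = 0 := (mem_F_iff.mp hzmem).2.2 j hj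
    simp only [Pi.add_apply, Pi.smul_apply, smul_eq_mul] at hz0
    nlinarith

theorem U_convex (n k : ℕ) (σs : Fin k → Finset (Fin n))
    (U : Fin n → Set (Fin (k - 1) → ℝ))
    (hU : ∀ j, U j = ⋃ i, ⋃ (_ : j ∈ σs i), S (k - 1) ((i : ℕ) + 1))
    (j : Fin n) :
    Convex ℝ (U j) := by
  rw [hU j]
  intro x hx y hy a b ha hb hab
  simp only [mem_iUnion] at hx hy ⊢
  obtain ⟨i₁, hm₁, hx⟩ := hx
  obtain ⟨i₂, hm₂, hy⟩ := hy
  rcases le_total (i₁ : ℕ) (i₂ : ℕ) with h | h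
  · rcases key_lemma h hx hy ha hb hab with h' | h'
    · exact ⟨i₁, hm₁, h'⟩
    · exact ⟨i₂, hm₂, h'⟩
  · have hcomm : a • x + b • y = b • y + a • x := add_comm _ _
    rw [hcomm]
    rcases key_lemma h hy hx hb ha (by linarith) with h' | h'
    · exact ⟨i₂, hm₂, h'⟩
    · exact ⟨i₁, hm₁, h'⟩
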